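/- Let f₀, G, Q, β be real numbers with G > 0, Q > 0, β < 0 and Q + Gβ ≤ 0, and define φ : ℝ → ℝ by φ(α) = f₀ − αG/(1 − αβ) + (α²/2)·Q/(1 − αβ)². Then φ′(α) < 0 for every α > 0, φ is strictly decreasing on (0, ∞), and there is no α* > 0 such that φ(α*) = min over α > 0 of φ(α) (i.e., no point of (0, ∞) minimizes φ over (0, ∞)). -/

import Mathlib

theorem conic_model_no_minimizer (f₀ G Q β : ℝ)
    (hG : G > 0) (hQ : Q > 0) (hβ : β < 0) (hQGβ : Q + G * β ≤ 0)
    (φ : ℝ → ℝ)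
    (hφ : ∀ α : ℝ, φ α = f₀ - α * G / (1 - α * β) + α ^ 2 / 2 * Q / (1 - α * β) ^ 2) :
    (∀ α : ℝ, α > 0 → deriv φ α < 0) ∧
    StrictAntiOn φ (Set.Ioi (0 : ℝ)) ∧
    ¬ ∃ αstar : ℝ, αstar > 0 ∧ ∀ α : ℝ, α > 0 → φ αstar ≤ φ α := by
  have hφ' : φ = fun α : ℝ => f₀ - α * G / (1 - α * β) + α ^ 2 / 2 * Q / (1 - α * β) ^ 2 :=
    funext hφ
  subst hφ'
  have hd : ∀ a : ℝ, 0 < a →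
      HasDerivAt (fun α : ℝ => f₀ - α * G / (1 - α * β) + α ^ 2 / 2 * Q / (1 - α * β) ^ 2)
        ((a * (Q + G * β) - G) / (1 - a * β) ^ 3) a := by
    intro a ha
    have hc : (0:ℝ) < 1 - a * β := by nlinarith
    have hne := hc.ne'
    have h1 : HasDerivAt (fun x : ℝ => 1 - x * β) (-β) a := by
      simpa using ((hasDerivAt_id a).mul_const β).const_sub 1
    have h2 : HasDerivAt (fun x : ℝ => x * G) G a := by
      simpa using (hasDerivAt_id a).mul_const G
    have h3 : HasDerivAt (fun x : ℝ => x * G / (1 - x * β))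
        ((G * (1 - a * β) - a * G * (-β)) / (1 - a * β) ^ 2) a := h2.div h1 hne
    have h4 : HasDerivAt (fun x : ℝ => x ^ 2 / 2 * Q) (a * Q) a := by
      have := ((hasDerivAt_pow 2 a).div_const 2).mul_const Q
      refine this.congr_deriv ?_
      ring
    have h5 : HasDerivAt (fun x : ℝ => (1 - x * β) ^ 2) (2 * (1 - a * β) * (-β)) a := by
      have := h1.pow 2
      refine this.congr_deriv ?_
      ring
    have h6 := h4.div h5 (by positivity)
    have h7 := (h3.const_sub f₀).add h6
    refine h7.congr_deriv ?_
    field_simp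
    ring
  have part1 : ∀ α : ℝ, α > 0 →
      deriv (fun α : ℝ => f₀ - α * G / (1 - α * β) + α ^ 2 / 2 * Q / (1 - α * β) ^ 2) α < 0 := by
    intro a ha
    rw [(hd a ha).deriv]
    have hc : (0:ℝ) < 1 - a * β := by nlinarith
    apply div_neg_of_neg_of_pos
    · nlinarith
    · positivity
  have part2 : StrictAntiOn (fun α : ℝ => f₀ - α * G / (1 - α * β) + α ^ 2 / 2 * Q / (1 - α * β) ^ 2)
      (Set.Ioi (0 : ℝ)) := by
    apply strictAntiOn_of_deriv_neg (convex_Ioi 0)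
    · intro a ha
      exact ((hd a ha).continuousAt).continuousWithinAt
    · intro a ha
      rw [interior_Ioi] at ha
      exact part1 a ha
  refine ⟨part1, part2, ?_⟩
  rintro ⟨a, ha, hmin⟩
  have h := part2 (Set.mem_Ioi.mpr ha) (Set.mem_Ioi.mpr (by linarith : (0:ℝ) < a + 1))
    (lt_add_one a)
  have := hmin (a + 1) (by linarith)
  linarith
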